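/- Let $a \geq 2$ be an integer and $p > 0$ a real. Set $s_i = \frac{12p}{3 \cdot 2^a + 2^{2a+1} - 2}$ and $D_0 = 2^a(2p + s_i) + 4^a s_i - 2p$. Then the identity $\frac{(2^a - 1)\left(6p - 2^a(2^a + 1)s_i\right)}{3 D_0} = \frac{3 \cdot 2^{2a-1} s_i - 6p}{3 D_0}$ holds; i.e., in the military-like hierarchy ($q = 0$), at $s = s_i$ the planted ranking ($b=0$) and the inverted two-class ranking ($b = a-1$) have the same hierarchy estimate: $\bar h_1(0; p, 0, s_i, a) = \bar h_1^{(i)}(a-1; p, 0, s_i, a)$. -/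

import Mathlib

/-- In the military-like hierarchy (`q = 0`), at `s = s_i = 12p/(3·2^a + 2^(2a+1) - 2)`,
the planted ranking and the inverted two-class ranking have the same first-order
hierarchy estimate. -/
theorem stmt_12 (a : ℕ) (ha : 2 ≤ a) (p : ℝ) (hp : 0 < p) :
    ((2 : ℝ) ^ a - 1) *
        (6 * p - (2 : ℝ) ^ a * ((2 : ℝ) ^ a + 1) *
          (12 * p / (3 * (2 : ℝ) ^ a + (2 : ℝ) ^ (2 * a + 1) - 2))) /
      (3 * ((2 : ℝ) ^ a * (2 * p + 12 * p / (3 * (2 : ℝ) ^ a + (2 : ℝ) ^ (2 * a + 1) - 2)) +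
        (4 : ℝ) ^ a * (12 * p / (3 * (2 : ℝ) ^ a + (2 : ℝ) ^ (2 * a + 1) - 2)) - 2 * p)) =
    (3 * (2 : ℝ) ^ (2 * a - 1) *
        (12 * p / (3 * (2 : ℝ) ^ a + (2 : ℝ) ^ (2 * a + 1) - 2)) - 6 * p) /
      (3 * ((2 : ℝ) ^ a * (2 * p + 12 * p / (3 * (2 : ℝ) ^ a + (2 : ℝ) ^ (2 * a + 1) - 2)) +
        (4 : ℝ) ^ a * (12 * p / (3 * (2 : ℝ) ^ a + (2 : ℝ) ^ (2 * a + 1) - 2)) - 2 * p)) := by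
  have hx4 : (4 : ℝ) ≤ (2 : ℝ) ^ a := by
    calc (4 : ℝ) = 2 ^ 2 := by norm_num
    _ ≤ 2 ^ a := pow_le_pow_right₀ (by norm_num) ha
  set x : ℝ := (2 : ℝ) ^ a with hxdef
  have h1 : (2 : ℝ) ^ (2 * a + 1) = 2 * x ^ 2 := by
    rw [pow_succ, two_mul, pow_add, hxdef]; ring
  have h2 : (4 : ℝ) ^ a = x ^ 2 := by
    rw [hxdef, ← pow_mul, show (4:ℝ) = 2^2 by norm_num, ← pow_mul, mul_comm]
  have h3 : (2 : ℝ) ^ (2 * a - 1) = x ^ 2 / 2 := by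
    have : 2 * a - 1 + 1 = 2 * a := by omega
    rw [eq_div_iff (by norm_num : (2:ℝ) ≠ 0), ← pow_succ, this, two_mul, pow_add, ← hxdef, sq]
  have hT : 3 * x + 2 * x ^ 2 - 2 ≠ 0 := by nlinarith
  rw [h1, h2, h3]
  congr 1
  field_simp
  have hT2 : x * (3 + x * 2) - 2 ≠ 0 := by nlinarith
  field_simp
  ring
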